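/- Let n be a positive integer, n* := n/gcd(n,2). For all partitions 𝔭 of type C (even size, odd parts with even multiplicity) and all partitions 𝔮, the type C duality satisfies d_{com,C}^{(n)}(𝔭 ⊔ 𝔮 ⊔ 𝔮) = (d_{com,C}^{(n)}(𝔭) + 2·d_{com,A}^{(n*)}(𝔮))_C, in the case n even with n/2 even, where d_{com,C}^{(n)}(𝔭) := (d_{com,A}^{(n/2)}(𝔭))_C. -/

import Mathlib

noncomputable section
open scoped Classical

namespace PaperStmt

/-- The parts of a partition (multiset of naturals) sorted in non-increasing order. -/
def sortDesc (p : Multiset ℕ) : List ℕ := (p.sort (· ≤ ·)).reverse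

/-- Partial sum of the first `k` entries of a list. -/
def psum (l : List ℕ) (k : ℕ) : ℕ := (l.take k).sum

/-- Dominance order on partitions of the same integer. -/
def Dom (p q : Multiset ℕ) : Prop :=
  p.sum = q.sum ∧ ∀ k, psum (sortDesc p) k ≤ psum (sortDesc q) k

/-- A partition: a multiset of positive parts. -/
def IsPartition (p : Multiset ℕ) : Prop := 0 ∉ p

/-- Type B: partition of an odd integer, every even part with even multiplicity. -/
def typeB (p : Multiset ℕ) : Prop := Odd p.sum ∧ ∀ v ≠ 0, Even v → Even (p.count v)

/-- Type C: partition of an even integer, every odd part with even multiplicity. -/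
def typeC (p : Multiset ℕ) : Prop := Even p.sum ∧ ∀ v, Odd v → Even (p.count v)

/-- Type D: partition of an even integer, every even part with even multiplicity. -/
def typeD (p : Multiset ℕ) : Prop := Even p.sum ∧ ∀ v ≠ 0, Even v → Even (p.count v)

/-- `q` is the `X`-collapse of `p`: the largest partition of type `X` below `p`
in dominance order. -/
def IsCollapse (X : Multiset ℕ → Prop) (p q : Multiset ℕ) : Prop :=
  X q ∧ Dom q p ∧ ∀ q', X q' → Dom q' p → Dom q' q

def collapse (X : Multiset ℕ → Prop) (p : Multiset ℕ) : Multiset ℕ :=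
  if h : ∃ q, IsCollapse X p q then h.choose else 0

def collapseB : Multiset ℕ → Multiset ℕ := collapse typeB
def collapseC : Multiset ℕ → Multiset ℕ := collapse typeC
def collapseD : Multiset ℕ → Multiset ℕ := collapse typeD

/-- The largest part. -/
def maxPart (p : Multiset ℕ) : ℕ := (sortDesc p).headI

/-- The smallest (positive) part. -/
def minPart (p : Multiset ℕ) : ℕ := (sortDesc p).getLastD 0

/-- `p⁺`: add 1 to the largest part. -/
def pplus (p : Multiset ℕ) : Multiset ℕ := (maxPart p + 1) ::ₘ p.erase (maxPart p)

/-- `p⁻`: subtract 1 from the smallest part, dropping a resulting zero. -/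
def pminus (p : Multiset ℕ) : Multiset ℕ :=
  Multiset.filter (0 < ·) ((minPart p - 1) ::ₘ p.erase (minPart p))

/-- `p⁺⁻`: add 1 to the largest part and subtract 1 from the smallest part. -/
def pmOp (p : Multiset ℕ) : Multiset ℕ := pminus (pplus p)

def zipSum : List ℕ → List ℕ → List ℕ
  | [], l => l
  | a :: as, [] => a :: as
  | a :: as, b :: bs => (a + b) :: zipSum as bs

/-- Coordinatewise sum of two partitions. -/
def addP (p q : Multiset ℕ) : Multiset ℕ := (zipSum (sortDesc p) (sortDesc q) : List ℕ)

/-- Double every part of a partition. -/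
def doubleP (p : Multiset ℕ) : Multiset ℕ := p.map (fun v => 2 * v)

/-- The partition `𝔰(m; n) = (n^a, b)` where `m = n a + b`, `0 ≤ b < n`. -/
def sMn (m n : ℕ) : Multiset ℕ :=
  Multiset.replicate (m / n) n + (if m % n = 0 then 0 else {m % n})

/-- The duality `d_{com,A}^{(n)}`: coordinatewise sum of the `𝔰(pᵢ; n)`. -/
def dcomA (n : ℕ) (p : Multiset ℕ) : Multiset ℕ :=
  (sortDesc p).foldr (fun q acc => addP (sMn q n) acc) 0

/-- Transpose (conjugate) of a partition: the `j`-th part is `#{i : pᵢ ≥ j}`. -/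
def transposeP (p : Multiset ℕ) : Multiset ℕ :=
  Multiset.filter (0 < ·)
    ((Multiset.range (maxPart p)).map (fun j => (p.filter (fun v => j + 1 ≤ v)).card))


/-- The type `C` duality `d_{com,C}^{(n)}` in the case `n` even with `n/2` even. -/
def dcomC (n : ℕ) (p : Multiset ℕ) : Multiset ℕ := collapseC (dcomA (n / 2) p)

/- ===== auxiliary lemmas ===== -/

lemma sortDesc_sorted (p : Multiset ℕ) : (sortDesc p).Pairwise (· ≥ ·) := by
  rw [sortDesc, List.pairwise_reverse]
  exact Multiset.pairwise_sort p (· ≤ ·)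

lemma sortDesc_coe (p : Multiset ℕ) : ((sortDesc p : List ℕ) : Multiset ℕ) = p := by
  rw [sortDesc, Multiset.coe_reverse, Multiset.sort_eq]

lemma mem_sortDesc {p : Multiset ℕ} {v : ℕ} : v ∈ sortDesc p ↔ v ∈ p := by
  rw [← Multiset.mem_coe, sortDesc_coe]

lemma sortDesc_of_sorted {l : List ℕ} (h : l.Pairwise (· ≥ ·)) :
    sortDesc (↑l : Multiset ℕ) = l := by
  have h1 : Multiset.sort (↑l : Multiset ℕ) (· ≤ ·) = l.reverse := by
    apply List.Perm.eq_of_pairwise' (r := (· ≤ ·))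
    · exact Multiset.pairwise_sort _ _
    · rw [List.pairwise_reverse]; exact h
    · rw [← Multiset.coe_eq_coe, Multiset.sort_eq, Multiset.coe_reverse]
  rw [sortDesc, h1, List.reverse_reverse]

lemma sortDesc_sum (p : Multiset ℕ) : (sortDesc p).sum = p.sum := by
  rw [← Multiset.sum_coe, sortDesc_coe]

lemma sortDesc_zero : sortDesc (0 : Multiset ℕ) = [] := by
  have := sortDesc_coe (0 : Multiset ℕ)
  rwa [← Multiset.coe_nil, Multiset.coe_eq_coe, List.perm_nil] at this

/- ===== zipSum lemmas ===== -/

lemma zipSum_nil (l : List ℕ) : zipSum l [] = l := by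
  cases l <;> rfl

lemma zipSum_comm : ∀ (a b : List ℕ), zipSum a b = zipSum b a
  | [], l => (zipSum_nil l).symm
  | a :: as, [] => rfl
  | a :: as, b :: bs => by simp only [zipSum, Nat.add_comm a b, zipSum_comm as bs]

lemma zipSum_assoc : ∀ (a b c : List ℕ),
    zipSum (zipSum a b) c = zipSum a (zipSum b c)
  | [], b, c => rfl
  | a :: as, [], c => rfl
  | a :: as, b :: bs, [] => by rw [zipSum_nil, zipSum_nil]
  | a :: as, b :: bs, c :: cs => by
      simp only [zipSum, Nat.add_assoc, zipSum_assoc as bs cs]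

lemma zipSum_take_sum : ∀ (a b : List ℕ) (k : ℕ),
    ((zipSum a b).take k).sum = (a.take k).sum + (b.take k).sum
  | [], b, k => by simp [zipSum]
  | a :: as, [], k => by simp [zipSum]
  | a :: as, b :: bs, 0 => rfl
  | a :: as, b :: bs, k + 1 => by
      simp only [zipSum, List.take_succ_cons, List.sum_cons,
        zipSum_take_sum as bs k]
      omega

lemma zipSum_sum : ∀ (a b : List ℕ), (zipSum a b).sum = a.sum + b.sum
  | [], b => by simp [zipSum]
  | a :: as, [] => by simp [zipSum]
  | a :: as, b :: bs => by
      simp only [zipSum, List.sum_cons, zipSum_sum as bs]; omega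

lemma sorted_le_headI {l : List ℕ} (h : l.Pairwise (· ≥ ·)) {z : ℕ} (hz : z ∈ l) :
    z ≤ l.headI := by
  cases l with
  | nil => cases hz
  | cons a as =>
      rcases List.mem_cons.mp hz with rfl | hz
      · exact le_refl _
      · exact List.rel_of_pairwise_cons h hz

lemma zipSum_le_head : ∀ {a b : List ℕ}, a.Pairwise (· ≥ ·) → b.Pairwise (· ≥ ·) →
    ∀ z ∈ zipSum a b, z ≤ a.headI + b.headI := by
  intro a b ha hb z hz
  induction a generalizing b with
  | nil =>
      simpa using (sorted_le_headI hb (by simpa [zipSum] using hz))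
  | cons x xs ih =>
      cases b with
      | nil =>
          simpa using (sorted_le_headI ha (by simpa [zipSum_nil] using hz))
      | cons y ys =>
          simp only [zipSum, List.mem_cons] at hz
          rcases hz with rfl | hz
          · simp
          · have h1 := ih (List.Pairwise.of_cons ha) (List.Pairwise.of_cons hb) hz
            have h2 : xs.headI ≤ x := by
              cases xs with
              | nil => simp
              | cons u us => exact List.rel_of_pairwise_cons ha (by simp)
            have h3 : ys.headI ≤ y := by
              cases ys with
              | nil => simp
              | cons u us => exact List.rel_of_pairwise_cons hb (by simp)
            simp only [List.headI]
            omega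

lemma zipSum_sorted : ∀ {a b : List ℕ}, a.Pairwise (· ≥ ·) → b.Pairwise (· ≥ ·) →
    (zipSum a b).Pairwise (· ≥ ·) := by
  intro a b ha hb
  induction a generalizing b with
  | nil => simpa [zipSum] using hb
  | cons x xs ih =>
      cases b with
      | nil => simpa [zipSum_nil] using ha
      | cons y ys =>
          have ha' := List.Pairwise.of_cons ha
          have hb' := List.Pairwise.of_cons hb
          simp only [zipSum, List.pairwise_cons]
          refine ⟨?_, ih ha' hb'⟩
          intro z hz
          have h1 := zipSum_le_head ha' hb' z hz
          have h2 : xs.headI ≤ x := by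
            cases xs with
            | nil => simp
            | cons u us => exact List.rel_of_pairwise_cons ha (by simp)
          have h3 : ys.headI ≤ y := by
            cases ys with
            | nil => simp
            | cons u us => exact List.rel_of_pairwise_cons hb (by simp)
          omega

/- ===== addP lemmas ===== -/

lemma sortDesc_addP (p q : Multiset ℕ) :
    sortDesc (addP p q) = zipSum (sortDesc p) (sortDesc q) := by
  rw [addP]
  exact sortDesc_of_sorted (zipSum_sorted (sortDesc_sorted p) (sortDesc_sorted q))

lemma addP_zero (p : Multiset ℕ) : addP 0 p = p := by
  rw [addP, sortDesc_zero]
  show ((zipSum [] (sortDesc p) : List ℕ) : Multiset ℕ) = p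
  rw [show zipSum [] (sortDesc p) = sortDesc p from rfl, sortDesc_coe]

lemma addP_comm (p q : Multiset ℕ) : addP p q = addP q p := by
  rw [addP, addP, zipSum_comm]

lemma addP_assoc (p q r : Multiset ℕ) : addP (addP p q) r = addP p (addP q r) := by
  show ((zipSum (sortDesc (addP p q)) (sortDesc r) : List ℕ) : Multiset ℕ)
      = ((zipSum (sortDesc p) (sortDesc (addP q r)) : List ℕ) : Multiset ℕ)
  rw [sortDesc_addP, sortDesc_addP, zipSum_assoc]

lemma addP_sum (p q : Multiset ℕ) : (addP p q).sum = p.sum + q.sum := by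
  rw [addP, Multiset.sum_coe, zipSum_sum, sortDesc_sum, sortDesc_sum]

lemma psum_addP (p q : Multiset ℕ) (k : ℕ) :
    psum (sortDesc (addP p q)) k = psum (sortDesc p) k + psum (sortDesc q) k := by
  rw [sortDesc_addP, psum, psum, psum, zipSum_take_sum]

/- ===== Dom lemmas ===== -/

lemma dom_refl (p : Multiset ℕ) : Dom p p := ⟨rfl, fun _ => le_refl _⟩

lemma dom_trans {p q r : Multiset ℕ} (h1 : Dom p q) (h2 : Dom q r) : Dom p r :=
  ⟨h1.1.trans h2.1, fun k => (h1.2 k).trans (h2.2 k)⟩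

lemma dom_addP_left {a b : Multiset ℕ} (r : Multiset ℕ) (h : Dom a b) :
    Dom (addP a r) (addP b r) := by
  constructor
  · rw [addP_sum, addP_sum, h.1]
  · intro k
    rw [psum_addP, psum_addP]
    exact Nat.add_le_add_right (h.2 k) _

/- ===== dcomA fold lemmas ===== -/

lemma dcomA_foldr (n : ℕ) (l : List ℕ) (X : Multiset ℕ) :
    List.foldr (fun q acc => addP (sMn q n) acc) X l =
      addP (List.foldr (fun q acc => addP (sMn q n) acc) 0 l) X := by
  induction l with
  | nil => rw [List.foldr_nil, List.foldr_nil, addP_zero]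
  | cons a as ih => rw [List.foldr_cons, List.foldr_cons, ih, addP_assoc]

lemma dcomA_perm (n : ℕ) {l₁ l₂ : List ℕ} (h : l₁.Perm l₂) :
    List.foldr (fun q acc => addP (sMn q n) acc) 0 l₁ =
      List.foldr (fun q acc => addP (sMn q n) acc) 0 l₂ := by
  have lcomm : LeftCommutative (fun (q : ℕ) (acc : Multiset ℕ) => addP (sMn q n) acc) :=
    ⟨fun a b x => by
      simp only [← addP_assoc]
      rw [addP_comm (sMn a n) (sMn b n)]⟩
  exact h.foldr_eq (lcomm := lcomm) 0

lemma dcomA_add (n : ℕ) (s t : Multiset ℕ) :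
    dcomA n (s + t) = addP (dcomA n s) (dcomA n t) := by
  have hperm : (sortDesc (s + t)).Perm (sortDesc s ++ sortDesc t) := by
    rw [← Multiset.coe_eq_coe, sortDesc_coe]
    show s + t = ((sortDesc s ++ sortDesc t : List ℕ) : Multiset ℕ)
    rw [← Multiset.coe_add, sortDesc_coe, sortDesc_coe]
  rw [dcomA, dcomA_perm n hperm, List.foldr_append, dcomA_foldr, dcomA, dcomA, addP_comm]

lemma zipSum_self : ∀ (l : List ℕ), zipSum l l = l.map (fun v => 2 * v)
  | [] => rfl
  | a :: as => by simp only [zipSum, zipSum_self as, List.map_cons, Nat.two_mul]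

lemma doubleP_eq_addP (t : Multiset ℕ) : doubleP t = addP t t := by
  rw [addP, zipSum_self, doubleP]
  rw [← Multiset.map_coe, sortDesc_coe]

/- ===== evenness lemmas ===== -/

lemma sMn_even {q m : ℕ} (hq : Even q) (hm : Even m) {v : ℕ} (hv : v ∈ sMn q m) :
    Even v := by
  rw [sMn, Multiset.mem_add] at hv
  rcases hv with hv | hv
  · rw [Multiset.eq_of_mem_replicate hv]; exact hm
  · by_cases h0 : q % m = 0
    · rw [if_pos h0] at hv; cases hv
    · rw [if_neg h0, Multiset.mem_singleton] at hv
      subst hv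
      rcases Nat.even_or_odd m with he | ho
      · rw [Nat.even_iff] at hq ⊢
        rw [Nat.mod_mod_of_dvd q (even_iff_two_dvd.mp hm), hq]
      · exact absurd ho (by simpa [Nat.odd_iff, Nat.even_iff] using hm)

lemma zipSum_even : ∀ {a b : List ℕ}, (∀ x ∈ a, Even x) → (∀ x ∈ b, Even x) →
    ∀ z ∈ zipSum a b, Even z := by
  intro a b ha hb z hz
  induction a generalizing b with
  | nil => exact hb z (by simpa [zipSum] using hz)
  | cons x xs ih =>
      cases b with
      | nil => exact ha z (by simpa [zipSum_nil] using hz)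
      | cons y ys =>
          simp only [zipSum, List.mem_cons] at hz
          rcases hz with rfl | hz
          · exact (ha x (by simp)).add (hb y (by simp))
          · exact ih (fun u hu => ha u (by simp [hu]))
              (fun u hu => hb u (by simp [hu])) hz

lemma addP_even {p q : Multiset ℕ} (hp : ∀ x ∈ p, Even x) (hq : ∀ x ∈ q, Even x) :
    ∀ x ∈ addP p q, Even x := by
  intro x hx
  rw [addP, Multiset.mem_coe] at hx
  exact zipSum_even (fun u hu => hp u (mem_sortDesc.mp hu))
    (fun u hu => hq u (mem_sortDesc.mp hu)) x hx

lemma doubleP_even (t : Multiset ℕ) : ∀ x ∈ doubleP t, Even x := by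
  intro x hx
  rw [doubleP, Multiset.mem_map] at hx
  rcases hx with ⟨v, _, rfl⟩
  exact even_two_mul v

lemma dcomA_even {m : ℕ} (hm : Even m) {e : Multiset ℕ} (he : ∀ x ∈ e, Even x) :
    ∀ x ∈ dcomA m e, Even x := by
  rw [dcomA]
  have key : ∀ l : List ℕ, (∀ x ∈ l, Even x) →
      ∀ x ∈ List.foldr (fun q acc => addP (sMn q m) acc) (0 : Multiset ℕ) l, Even x := by
    intro l hl
    induction l with
    | nil => intro x hx; cases hx
    | cons a as ih =>
        rw [List.foldr_cons]
        exact addP_even (fun v hv => sMn_even (hl a (by simp)) hm hv)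
          (ih (fun u hu => hl u (by simp [hu])))
  exact key _ (fun x hx => he x (mem_sortDesc.mp hx))

lemma even_sum_of_even {t : Multiset ℕ} (h : ∀ x ∈ t, Even x) : Even t.sum := by
  induction t using Multiset.induction_on with
  | empty => simp
  | cons a s ih =>
      rw [Multiset.sum_cons]
      exact (h a (by simp)).add (ih (fun x hx => h x (by simp [hx])))

lemma typeC_of_even {t : Multiset ℕ} (h : ∀ x ∈ t, Even x) : typeC t := by
  refine ⟨even_sum_of_even h, fun v hv => ?_⟩
  have : v ∉ t := fun hm => (Nat.not_even_iff_odd.mpr hv) (h v hm)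
  simp [Multiset.count_eq_zero_of_notMem this]

/- ===== splitting a multiset with even multiplicities ===== -/

lemma even_counts_split (o : Multiset ℕ) (h : ∀ v, Even (o.count v)) :
    ∃ w, o = w + w := by
  induction o using Multiset.strongInductionOn with
  | ih o ih =>
    rcases Multiset.empty_or_exists_mem o with h0 | ⟨a, ha⟩
    · exact ⟨0, by simp [h0]⟩
    · have hc2 : 2 ≤ o.count a := by
        have h1 : 1 ≤ o.count a := Multiset.one_le_count_iff_mem.mpr ha
        rcases h a with ⟨k, hk⟩
        omega
      have ha' : a ∈ o.erase a := by
        rw [← Multiset.one_le_count_iff_mem, Multiset.count_erase_self]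
        omega
      have hoo : o = a ::ₘ a ::ₘ (o.erase a).erase a := by
        rw [Multiset.cons_erase ha', Multiset.cons_erase ha]
      have hlt : (o.erase a).erase a < o := by
        calc (o.erase a).erase a ≤ o.erase a := Multiset.erase_le _ _
        _ < o := Multiset.erase_lt.mpr ha
      have hcounts : ∀ v, Even (((o.erase a).erase a).count v) := by
        intro v
        by_cases hva : v = a
        · subst hva
          rw [Multiset.count_erase_self, Multiset.count_erase_self]
          rcases h v with ⟨k, hk⟩
          exact ⟨k - 1, by omega⟩
        · rw [Multiset.count_erase_of_ne hva, Multiset.count_erase_of_ne hva]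
          exact h v
      rcases ih _ hlt hcounts with ⟨w, hw⟩
      refine ⟨a ::ₘ w, ?_⟩
      rw [hoo, hw]
      ext v
      simp only [Multiset.count_add, Multiset.count_cons]
      omega

/- ===== dcomA of a type C partition is even ===== -/

lemma dcomA_typeC_even {m : ℕ} (hm : Even m) {p : Multiset ℕ} (hC : typeC p) :
    ∀ x ∈ dcomA m p, Even x := by
  classical
  set e := p.filter (fun v => Even v) with he_def
  set o := p.filter (fun v => ¬ Even v) with ho_def
  have hpe : e + o = p := Multiset.filter_add_not _ p
  have hocount : ∀ v, Even (o.count v) := by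
    intro v
    rw [ho_def, Multiset.count_filter]
    by_cases hv : Even v
    · simp [hv]
    · simpa [hv] using hC.2 v (Nat.not_even_iff_odd.mp hv)
  rcases even_counts_split o hocount with ⟨w, hw⟩
  have hsplit : p = e + (w + w) := by rw [← hpe, hw]
  rw [hsplit, dcomA_add, dcomA_add]
  apply addP_even
  · exact dcomA_even hm (fun x hx => by
      rw [he_def] at hx
      exact (Multiset.mem_filter.mp hx).2)
  · rw [← doubleP_eq_addP]
    exact doubleP_even _

/- ===== collapse lemmas ===== -/

lemma isCollapse_self {t : Multiset ℕ} (h : typeC t) : IsCollapse typeC t t :=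
  ⟨h, dom_refl t, fun _ _ hd => hd⟩

lemma collapseC_spec {t : Multiset ℕ} (hex : ∃ c, IsCollapse typeC t c) :
    IsCollapse typeC t (collapseC t) := by
  have : collapseC t = hex.choose := by
    rw [collapseC, collapse, dif_pos hex]
  rw [this]
  exact hex.choose_spec

lemma isCollapse_congr {X Y : Multiset ℕ} (h1 : Dom X Y) (h2 : Dom Y X) :
    IsCollapse typeC X = IsCollapse typeC Y := by
  funext c
  apply propext
  constructor
  · rintro ⟨hc, hd, hmax⟩
    exact ⟨hc, dom_trans hd h1, fun q' hq' hd' => hmax q' hq' (dom_trans hd' h2)⟩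
  · rintro ⟨hc, hd, hmax⟩
    exact ⟨hc, dom_trans hd h2, fun q' hq' hd' => hmax q' hq' (dom_trans hd' h1)⟩

lemma collapse_congr {X Y : Multiset ℕ} (h : IsCollapse typeC X = IsCollapse typeC Y) :
    collapseC X = collapseC Y := by
  rw [collapseC, collapse, collapse, h]
/-- compatibility of `d_{com,C}^{(n)}` with induction,
in the case `n` even with `n/2` even. -/
theorem dcomC_ind (n : ℕ) (hn : 0 < n) (hne : Even n) (hn2 : Even (n / 2))
    (p q : Multiset ℕ) (hp : IsPartition p) (hq : IsPartition q) (hC : typeC p) :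
    dcomC n (p + q + q) = collapseC (addP (dcomC n p) (doubleP (dcomA (n / 2) q))) := by
  set m := n / 2 with hm_def
  set A := dcomA m p with hA_def
  set R := dcomA m q with hR_def
  have hA : typeC A := typeC_of_even (dcomA_typeC_even hn2 hC)
  have hex : ∃ c, IsCollapse typeC A c := ⟨A, isCollapse_self hA⟩
  have hB : IsCollapse typeC A (collapseC A) := collapseC_spec hex
  have domBA : Dom (collapseC A) A := hB.2.1
  have domAB : Dom A (collapseC A) := hB.2.2 A hA (dom_refl A)
  have hLHS : dcomA m (p + q + q) = addP A (doubleP R) := by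
    rw [dcomA_add, dcomA_add, addP_assoc, ← doubleP_eq_addP, ← hA_def, ← hR_def]
  have h1 : Dom (addP A (doubleP R)) (addP (collapseC A) (doubleP R)) :=
    dom_addP_left _ domAB
  have h2 : Dom (addP (collapseC A) (doubleP R)) (addP A (doubleP R)) :=
    dom_addP_left _ domBA
  show collapseC (dcomA m (p + q + q)) =
    collapseC (addP (collapseC (dcomA m p)) (doubleP (dcomA m q)))
  rw [hLHS]
  exact collapse_congr (isCollapse_congr h1 h2)

end PaperStmt
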